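/- In the change-point model below, for 0 ≤ l < n, ν-almost everywhere ν(θ ≤ n − l − 1 | 𝓕_n) = Π_{n−l−1} · L_{l+1}(X_{n−l−1}, …, X_n) / G_{l+1}(X_{n−l−1}, …, X_n, Π_{n−l−1}), where Π_m := ν(θ ≤ m | 𝓕_m). -/

import Mathlib

open MeasureTheory Finset
open scoped NNReal ENNReal

noncomputable section

/-- `L_m(x_k, …, x_N) = ∏_{r=k+1}^{N-m} f⁰(x_{r-1}, x_r) · ∏_{r=N-m+1}^{N} f¹(x_{r-1}, x_r)`. -/
def Lfn {E : Type*} (f0 f1 : E → E → ℝ≥0) (k N m : ℕ) (xv : ℕ → E) : ℝ≥0 :=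
  (∏ r ∈ Finset.Icc (k + 1) (N - m), f0 (xv (r - 1)) (xv r)) *
    ∏ r ∈ Finset.Icc (N - m + 1) N, f1 (xv (r - 1)) (xv r)

/-- Density `ℓ_j(x₀,…,x_n)` of the observations given the change point `θ = j`:
`ℓ_j = L_{n-j+1}` if `1 ≤ j ≤ n`, `ℓ₀ = L_n`, `ℓ_j = L₀` for `j > n`. -/
def ellDens {E : Type*} (f0 f1 : E → E → ℝ≥0) (n j : ℕ) (xv : ℕ → E) : ℝ≥0 :=
  if j = 0 then Lfn f0 f1 0 n n xv
  else if j ≤ n then Lfn f0 f1 0 n (n - j + 1) xv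
  else Lfn f0 f1 0 n 0 xv

/-- Extension of the observations `(x₁, …, x_n)` to a full trajectory `(x₀, x₁, …, x_n)`
with `x₀ = x` (entries beyond `n` are irrelevant and set to `x`). -/
def extvec {E : Type*} (n : ℕ) (x : E) (xs : Fin n → E) : ℕ → E := fun r =>
  if h : 1 ≤ r ∧ r ≤ n then xs ⟨r - 1, by omega⟩ else x

/-- The prior distribution of the change point: `ρ 0 = π`, `ρ j = (1-π) p^(j-1) (1-p)`, `j ≥ 1`. -/
def prior (p π : ℝ) (j : ℕ) : ℝ≥0∞ :=
  if j = 0 then ENNReal.ofReal π else ENNReal.ofReal ((1 - π) * p ^ (j - 1) * (1 - p))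

/-- The joint law `ν` of `(θ, X₁, …, X_n)` given `X₀ = x`: its restriction to `{j} × Eⁿ` is
`ρ j` times the measure with density `(x₁,…,x_n) ↦ ℓ_j(x, x₁, …, x_n)` w.r.t. `μ^⊗n`. -/
def nuMeasure {E : Type*} [MeasurableSpace E] (μ : Measure E) (f0 f1 : E → E → ℝ≥0)
    (p π : ℝ) (x : E) (n : ℕ) : Measure (ℕ × (Fin n → E)) :=
  Measure.sum fun j =>
    prior p π j •
      Measure.map (fun xs => (j, xs))
        ((Measure.pi fun _ : Fin n => μ).withDensity fun xs =>
          (ellDens f0 f1 n j (extvec n x xs) : ℝ≥0∞))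

/-- `S(x₀, …, x_m) = π L_m + (1-π)(∑_{i=1}^m p^{i-1} q L_{m-i+1} + p^m L₀)`. -/
def Sfn {E : Type*} (f0 f1 : E → E → ℝ≥0) (p π : ℝ) (m : ℕ) (xv : ℕ → E) : ℝ :=
  π * (Lfn f0 f1 0 m m xv : ℝ) +
    (1 - π) * ((∑ i ∈ Finset.Icc 1 m, p ^ (i - 1) * (1 - p) * (Lfn f0 f1 0 m (m - i + 1) xv : ℝ)) +
      p ^ m * (Lfn f0 f1 0 m 0 xv : ℝ))

/-- `G_{l+1}(x_k, …, x_{k+l+1}, α) = α L_{l+1} + (1-α)(∑_{i=0}^{l} p^{l-i} q L_{i+1} + p^{l+1} L₀)`. -/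
def Gfn {E : Type*} (f0 f1 : E → E → ℝ≥0) (p : ℝ) (k l : ℕ) (xv : ℕ → E) (α : ℝ) : ℝ :=
  α * (Lfn f0 f1 k (k + l + 1) (l + 1) xv : ℝ) +
    (1 - α) *
      ((∑ i ∈ Finset.range (l + 1), p ^ (l - i) * (1 - p) * (Lfn f0 f1 k (k + l + 1) (i + 1) xv : ℝ)) +
        p ^ (l + 1) * (Lfn f0 f1 k (k + l + 1) 0 xv : ℝ))

/-- The σ-algebra `𝓕_m` generated by the observations `(X₁, …, X_m)`, `m ≤ n`. -/
def Ffil {E : Type*} [MeasurableSpace E] (n m : ℕ) (h : m ≤ n) :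
    MeasurableSpace (ℕ × (Fin n → E)) :=
  MeasurableSpace.comap (fun ω => fun i : Fin m => ω.2 (Fin.castLE h i)) inferInstance

end

open MeasureTheory
set_option linter.unusedSectionVars false
namespace Stmt8Aux

open MeasureTheory Finset
open scoped NNReal ENNReal

variable {E : Type*} [MeasurableSpace E]

lemma measurable_extvec (x : E) (n r : ℕ) :
    Measurable fun xs : Fin n → E => extvec n x xs r := by
  unfold extvec
  by_cases h : 1 ≤ r ∧ r ≤ n
  · simpa only [dif_pos h] using measurable_pi_apply _
  · simpa only [dif_neg h] using measurable_const

lemma extvec_update_ne (x : E) {n : ℕ} (xs : Fin n → E) (i : Fin n) (y : E) (r : ℕ)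
    (hr : r ≠ (i : ℕ) + 1) : extvec n x (Function.update xs i y) r = extvec n x xs r := by
  unfold extvec
  by_cases h : 1 ≤ r ∧ r ≤ n
  · simp only [dif_pos h]
    rw [Function.update_of_ne (by simp only [ne_eq, Fin.ext_iff]; omega)]
  · simp only [dif_neg h]

lemma extvec_update_eq (x : E) {n : ℕ} (xs : Fin n → E) (i : Fin n) (y : E) :
    extvec n x (Function.update xs i y) ((i : ℕ) + 1) = y := by
  unfold extvec
  have h : 1 ≤ (i : ℕ) + 1 ∧ (i : ℕ) + 1 ≤ n := ⟨Nat.le_add_left _ _, i.isLt⟩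
  simp only [dif_pos h]
  have : (⟨(i : ℕ) + 1 - 1, by omega⟩ : Fin n) = i := by ext; simp
  rw [this, Function.update_self]

lemma Lfn_extvec_update (f0 f1 : E → E → ℝ≥0) (x : E) {n : ℕ} (k K t : ℕ)
    (xs : Fin n → E) (i : Fin n) (y : E) (hiK : K ≤ (i : ℕ)) :
    Lfn f0 f1 k K t (extvec n x (Function.update xs i y)) =
      Lfn f0 f1 k K t (extvec n x xs) := by
  unfold Lfn
  congr 1
  · refine Finset.prod_congr rfl fun r hr => ?_
    simp only [Finset.mem_Icc] at hr
    have h1 : r - K + K = r ∨ r ≤ K := by omega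
    rw [extvec_update_ne x xs i y (r - 1) (by omega), extvec_update_ne x xs i y r (by omega)]
  · refine Finset.prod_congr rfl fun r hr => ?_
    simp only [Finset.mem_Icc] at hr
    rw [extvec_update_ne x xs i y (r - 1) (by omega), extvec_update_ne x xs i y r (by omega)]

variable (f0 f1 : E → E → ℝ≥0)

lemma measurable_f_pair (hf0 : Measurable (Function.uncurry f0)) (x : E) (n a b : ℕ) :
    Measurable fun xs : Fin n → E => (f0 (extvec n x xs a) (extvec n x xs b) : ℝ≥0∞) :=
  ((hf0.comp ((measurable_extvec x n a).prodMk (measurable_extvec x n b))).coe_nnreal_ennreal)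

lemma measurable_Lfn (hf0 : Measurable (Function.uncurry f0))
    (hf1 : Measurable (Function.uncurry f1)) (x : E) (n k K t : ℕ) :
    Measurable fun xs : Fin n → E => (Lfn f0 f1 k K t (extvec n x xs) : ℝ≥0∞) := by
  unfold Lfn
  simp only [ENNReal.coe_mul, ENNReal.coe_finset_prod]
  exact ((Finset.measurable_prod _ fun r _ => measurable_f_pair f0 hf0 x n _ _).mul
    (Finset.measurable_prod _ fun r _ => measurable_f_pair f1 hf1 x n _ _))

end Stmt8Aux
namespace Stmt8Aux

section Chain

variable {E : Type*} [MeasurableSpace E] (μ : Measure E) [SigmaFinite μ]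
  (f0 f1 : E → E → ℝ≥0)

/-- indices `< m` -/
def lowSet (n m : ℕ) : Finset (Fin n) := Finset.univ.filter fun i => (i : ℕ) < m
/-- indices `≥ k` -/
def highSet (n k : ℕ) : Finset (Fin n) := Finset.univ.filter fun i => k ≤ (i : ℕ)

lemma measurable_sel (hf0 : Measurable (Function.uncurry f0))
    (hf1 : Measurable (Function.uncurry f1)) (x : E) (n : ℕ) (b : Bool) (a c : ℕ) :
    Measurable fun xs : Fin n → E =>
      ((cond b f1 f0) (extvec n x xs a) (extvec n x xs c) : ℝ≥0∞) := by
  cases b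
  · exact measurable_f_pair f0 hf0 x n a c
  · exact measurable_f_pair f1 hf1 x n a c

lemma chain_collapse (hf0 : Measurable (Function.uncurry f0))
    (hf1 : Measurable (Function.uncurry f1))
    (hi0 : ∀ z, ∫⁻ y, (f0 z y : ℝ≥0∞) ∂μ = 1) (hi1 : ∀ z, ∫⁻ y, (f1 z y : ℝ≥0∞) ∂μ = 1)
    (x : E) (n m : ℕ) (hmn : m ≤ n) (σ : ℕ → Bool)
    (h : (Fin n → E) → ℝ≥0∞) (hh : Measurable h)
    (hdep : ∀ (xs : Fin n → E) (i : Fin n) (y : E), m ≤ (i : ℕ) →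
      h (Function.update xs i y) = h xs) :
    ∫⁻ xs, h xs * ∏ r ∈ Finset.Icc (m + 1) n,
        ((cond (σ r) f1 f0) (extvec n x xs (r - 1)) (extvec n x xs r) : ℝ≥0∞)
        ∂(Measure.pi fun _ : Fin n => μ)
      = (∫⋯∫⁻_(lowSet n m), h ∂(fun _ => μ)) (fun _ => x) := by
  set F : ℕ → (Fin n → E) → ℝ≥0∞ := fun k xs => h xs * ∏ r ∈ Finset.Icc (m + 1) k,
    ((cond (σ r) f1 f0) (extvec n x xs (r - 1)) (extvec n x xs r) : ℝ≥0∞) with hF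
  have hFmeas : ∀ k, Measurable (F k) := fun k =>
    hh.mul (Finset.measurable_prod _ fun r _ => measurable_sel f0 f1 hf0 hf1 x n _ _ _)
  have key : ∀ t, t ≤ n - m → (∫⋯∫⁻_(highSet n (n - t)), F n ∂(fun _ => μ)) = F (n - t) := by
    intro t
    induction t with
    | zero =>
      intro _
      have he : highSet n n = ∅ := by
        ext i; simp only [highSet, Finset.mem_filter, Finset.mem_univ, true_and,
          Finset.notMem_empty, iff_false]; omega
      simp only [Nat.sub_zero, he, lmarginal_empty]
    | succ t ih =>
      intro ht
      set k := n - (t + 1) with hk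
      have hkm : m ≤ k := by omega
      have hk1 : k + 1 ≤ n := by omega
      have hi0' : n - t = k + 1 := by omega
      have hsplit : highSet n k = {(⟨k, by omega⟩ : Fin n)} ∪ highSet n (k + 1) := by
        ext i
        simp only [highSet, Finset.mem_filter, Finset.mem_univ, true_and, Finset.mem_union,
          Finset.mem_singleton, Fin.ext_iff]
        omega
      have hdisj : Disjoint {(⟨k, by omega⟩ : Fin n)} (highSet n (k + 1)) := by
        simp only [Finset.disjoint_left, Finset.mem_singleton, highSet, Finset.mem_filter,
          Finset.mem_univ, true_and]
        rintro i rfl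
        simp only [not_le]; omega
      rw [hsplit, lmarginal_union _ _ (hFmeas n) hdisj]
      have hinner : (∫⋯∫⁻_(highSet n (k + 1)), F n ∂(fun _ => μ)) = F (k + 1) := by
        rw [← hi0']; exact ih (by omega)
      rw [hinner, lmarginal_singleton]
      funext xs
      have hupd : ∀ y : E, F (k + 1) (Function.update xs ⟨k, by omega⟩ y) =
          F k xs * ((cond (σ (k + 1)) f1 f0) (extvec n x xs k) y : ℝ≥0∞) := by
        intro y
        simp only [hF]
        rw [Finset.prod_Icc_succ_top (by omega : m + 1 ≤ k + 1)]
        rw [hdep _ _ _ (by simpa using hkm)]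
        rw [mul_assoc]
        congr 2
        · refine Finset.prod_congr rfl fun r hr => ?_
          simp only [Finset.mem_Icc] at hr
          rw [extvec_update_ne x xs _ y (r - 1) (by simp only [Fin.val_mk]; omega),
            extvec_update_ne x xs _ y r (by simp only [Fin.val_mk]; omega)]
        · rw [extvec_update_ne x xs _ y (k + 1 - 1) (by simp only [Fin.val_mk]; omega)]
          have : extvec n x (Function.update xs ⟨k, by omega⟩ y) (k + 1) = y := by
            simpa using extvec_update_eq x xs ⟨k, by omega⟩ y
          rw [Nat.add_sub_cancel, this]
      simp only [hupd]
      rw [lintegral_const_mul _ (by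
        cases σ (k + 1)
        · exact (hf0.comp measurable_prodMk_left).coe_nnreal_ennreal
        · exact (hf1.comp measurable_prodMk_left).coe_nnreal_ennreal)]
      cases hσ : σ (k + 1)
      · simp only [cond_false, hi0, mul_one]
      · simp only [cond_true, hi1, mul_one]
  have huniv : (Finset.univ : Finset (Fin n)) = lowSet n m ∪ highSet n m := by
    ext i
    simp only [Finset.mem_univ, Finset.mem_union, lowSet, highSet, Finset.mem_filter, true_and,
      true_iff]
    omega
  have hdisj2 : Disjoint (lowSet n m) (highSet n m) := by
    simp only [Finset.disjoint_left, lowSet, highSet, Finset.mem_filter, Finset.mem_univ, true_and]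
    omega
  have hhigh : (∫⋯∫⁻_(highSet n m), F n ∂(fun _ => μ)) = F m := by
    have := key (n - m) le_rfl
    rwa [show n - (n - m) = m by omega] at this
  have hFm : F m = h := by
    funext xs
    simp only [hF, Finset.Icc_eq_empty (by omega : ¬ m + 1 ≤ m), Finset.prod_empty, mul_one]
  calc ∫⁻ xs, F n xs ∂(Measure.pi fun _ : Fin n => μ)
      = (∫⋯∫⁻_(Finset.univ), F n ∂(fun _ => μ)) (fun _ => x) :=
        lintegral_eq_lmarginal_univ (fun _ => x)
    _ = (∫⋯∫⁻_(lowSet n m), h ∂(fun _ => μ)) (fun _ => x) := by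
        rw [huniv, lmarginal_union _ _ (hFmeas n) hdisj2, hhigh, hFm]

end Chain
end Stmt8Aux
namespace Stmt8Aux

open MeasureTheory Finset
open scoped NNReal ENNReal

section LfnSplit

variable {E : Type*} (f0 f1 : E → E → ℝ≥0)

lemma Lfn_split (k K N t : ℕ) (h1 : k ≤ K) (h2 : K ≤ N) (ht : t ≤ N) (xv : ℕ → E) :
    Lfn f0 f1 k N t xv =
      Lfn f0 f1 k K (K - (N - t)) xv * Lfn f0 f1 K N (min t (N - K)) xv := by
  unfold Lfn
  simp only [Finset.Icc_add_one_left_eq_Ioc]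
  rcases le_or_gt K (N - t) with hc | hc
  · have e1 : K - (K - (N - t)) = K := by omega
    have e2 : N - min t (N - K) = N - t := by omega
    rw [e1, e2, ← Finset.prod_Ioc_consecutive (fun r => f0 (xv (r - 1)) (xv r)) h1 hc,
      Finset.Ioc_self, Finset.prod_empty]
    ring
  · have e1 : K - (K - (N - t)) = N - t := by omega
    have e2 : N - min t (N - K) = K := by omega
    rw [e1, e2, ← Finset.prod_Ioc_consecutive (fun r => f1 (xv (r - 1)) (xv r)) hc.le h2,
      Finset.Ioc_self, Finset.prod_empty]
    ring

lemma Lfn_sat (N t : ℕ) (ht : N ≤ t) (xv : ℕ → E) :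
    Lfn f0 f1 0 N t xv = Lfn f0 f1 0 N N xv := by
  unfold Lfn
  rw [Nat.sub_self, Nat.sub_eq_zero_of_le ht]

lemma Lfn_selector (k N t : ℕ) (hkt : k ≤ N - t) (hkN : k ≤ N) (xv : ℕ → E) :
    (Lfn f0 f1 k N t xv : ℝ≥0∞) =
      ∏ r ∈ Finset.Icc (k + 1) N,
        ((cond (decide (N - t < r)) f1 f0) (xv (r - 1)) (xv r) : ℝ≥0∞) := by
  unfold Lfn
  push_cast
  simp only [Finset.Icc_add_one_left_eq_Ioc]
  rw [← Finset.prod_Ioc_consecutive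
    (fun r => ((cond (decide (N - t < r)) f1 f0) (xv (r - 1)) (xv r) : ℝ≥0∞)) hkt
    (by omega : N - t ≤ N)]
  congr 1
  · refine Finset.prod_congr rfl fun r hr => ?_
    simp only [Finset.mem_Ioc] at hr
    simp only [decide_eq_false (by omega : ¬ N - t < r), cond_false]
  · refine Finset.prod_congr rfl fun r hr => ?_
    simp only [Finset.mem_Ioc] at hr
    simp only [decide_eq_true_eq, hr.1, decide_eq_true, cond_true]

end LfnSplit

section Prior

lemma ennreal_tsum_shift (f : ℕ → ℝ≥0∞) (k : ℕ) :
    ∑' j, f j = (∑ j ∈ Finset.range k, f j) + ∑' j, f (j + k) := by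
  induction k with
  | zero => simp
  | succ k ih =>
    rw [ih, Finset.sum_range_succ, add_assoc]
    congr 1
    rw [tsum_eq_zero_add' ENNReal.summable]
    congr 1
    · rw [Nat.zero_add]
    · refine tsum_congr fun j => ?_
      congr 1
      omega

variable {p π : ℝ} (hp : p ∈ Set.Ioo (0 : ℝ) 1) (hπ : π ∈ Set.Ioo (0 : ℝ) 1)

include hp hπ in
lemma prior_tail_tsum (N : ℕ) :
    ∑' j, prior p π (j + (N + 1)) = ENNReal.ofReal ((1 - π) * p ^ N) := by
  obtain ⟨hp0, hp1⟩ := hp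
  obtain ⟨hπ0, hπ1⟩ := hπ
  have h1 : ∀ j : ℕ, prior p π (j + (N + 1)) =
      ENNReal.ofReal ((1 - π) * p ^ N * (1 - p) * p ^ j) := by
    intro j
    unfold prior
    rw [if_neg (by omega)]
    congr 1
    have : j + (N + 1) - 1 = N + j := by omega
    rw [this, pow_add]
    ring
  simp only [h1]
  rw [← ENNReal.ofReal_tsum_of_nonneg (fun j => mul_nonneg (mul_nonneg (mul_nonneg (by linarith) (pow_nonneg hp0.le _)) (by linarith)) (pow_nonneg hp0.le _))
    ((summable_geometric_of_lt_one hp0.le hp1).mul_left _)]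
  congr 1
  rw [tsum_mul_left, tsum_geometric_of_lt_one hp0.le hp1]
  rw [mul_assoc, mul_inv_cancel₀ (by linarith : (1:ℝ) - p ≠ 0), mul_one]

include hp hπ in
lemma tsum_prior : ∑' j, prior p π j = 1 := by
  rw [ennreal_tsum_shift _ 1, Finset.sum_range_one]
  have := prior_tail_tsum hp hπ 0
  simp only [Nat.zero_add] at this ⊢
  rw [this]
  unfold prior
  rw [if_pos rfl, pow_zero, mul_one, ← ENNReal.ofReal_add hπ.1.le (by nlinarith [hπ.2]),
    ← ENNReal.ofReal_one]
  congr 1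
  ring

end Prior
end Stmt8Aux
namespace Stmt8Aux

open MeasureTheory Finset
open scoped NNReal ENNReal

section Nu

variable {E : Type*} [MeasurableSpace E] (μ : Measure E) [SigmaFinite μ]
  (f0 f1 : E → E → ℝ≥0) (p π : ℝ) (x : E) (n : ℕ)

/-- the `n`-fold product measure -/
noncomputable def PiM : Measure (Fin n → E) := Measure.pi fun _ : Fin n => μ

/-- conditional density of observations given `θ = j`, as `ℝ≥0∞` function -/
noncomputable def ellE (j : ℕ) : (Fin n → E) → ℝ≥0∞ :=
  fun xs => (ellDens f0 f1 n j (extvec n x xs) : ℝ≥0∞)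

variable (hf0 : Measurable (Function.uncurry f0)) (hf1 : Measurable (Function.uncurry f1))

include hf0 hf1 in
lemma measurable_ellE (j : ℕ) : Measurable (ellE f0 f1 x n j) := by
  unfold ellE ellDens
  split_ifs
  · exact measurable_Lfn f0 f1 hf0 hf1 x n _ _ _
  · exact measurable_Lfn f0 f1 hf0 hf1 x n _ _ _
  · exact measurable_Lfn f0 f1 hf0 hf1 x n _ _ _

include hf0 hf1 in
lemma nu_lintegral (g : ℕ × (Fin n → E) → ℝ≥0∞) (hg : Measurable g) :
    ∫⁻ ω, g ω ∂(nuMeasure μ f0 f1 p π x n) =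
      ∑' j, prior p π j * ∫⁻ xs, g (j, xs) * ellE f0 f1 x n j xs ∂(PiM μ n) := by
  unfold nuMeasure
  rw [lintegral_sum_measure]
  refine tsum_congr fun j => ?_
  rw [lintegral_smul_measure]
  congr 1
  have h2 := lintegral_withDensity_eq_lintegral_mul (PiM μ n)
    (measurable_ellE f0 f1 x n hf0 hf1 j) (g := fun xs => g (j, xs))
    (hg.comp measurable_prodMk_left)
  simp only [Pi.mul_apply] at h2
  calc ∫⁻ a, g a ∂(Measure.map (Prod.mk j) ((PiM μ n).withDensity (ellE f0 f1 x n j)))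
      = ∫⁻ xs, g (j, xs) ∂((PiM μ n).withDensity (ellE f0 f1 x n j)) :=
        lintegral_map hg measurable_prodMk_left
    _ = ∫⁻ xs, ellE f0 f1 x n j xs * g (j, xs) ∂(PiM μ n) := h2
    _ = ∫⁻ xs, g (j, xs) * ellE f0 f1 x n j xs ∂(PiM μ n) := by
        simp_rw [mul_comm]

variable (hi0 : ∀ z, ∫⁻ y, (f0 z y : ℝ≥0∞) ∂μ = 1) (hi1 : ∀ z, ∫⁻ y, (f1 z y : ℝ≥0∞) ∂μ = 1)

include hf0 hf1 hi0 hi1 in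
lemma lintegral_Lfn_one (t : ℕ) (ht : t ≤ n) :
    ∫⁻ xs, (Lfn f0 f1 0 n t (extvec n x xs) : ℝ≥0∞) ∂(PiM μ n) = 1 := by
  have hsel : ∀ xs : Fin n → E, (Lfn f0 f1 0 n t (extvec n x xs) : ℝ≥0∞) =
      (1 : ℝ≥0∞) * ∏ r ∈ Finset.Icc (0 + 1) n,
        ((cond (decide (n - t < r)) f1 f0) (extvec n x xs (r - 1)) (extvec n x xs r) : ℝ≥0∞) := by
    intro xs
    rw [one_mul]
    exact Lfn_selector f0 f1 0 n t (Nat.zero_le _) (Nat.zero_le _) (extvec n x xs)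
  simp only [hsel]
  have := chain_collapse μ f0 f1 hf0 hf1 hi0 hi1 x n 0 (Nat.zero_le _)
    (fun r => decide (n - t < r)) (fun _ => 1) measurable_const (fun _ _ _ _ => rfl)
  rw [PiM]
  rw [this]
  have : lowSet n 0 = ∅ := by
    ext i; simp [lowSet]
  rw [this, lmarginal_empty]

include hf0 hf1 hi0 hi1 in
lemma lintegral_ellE_one (j : ℕ) :
    ∫⁻ xs, ellE f0 f1 x n j xs ∂(PiM μ n) = 1 := by
  unfold ellE ellDens
  split_ifs with h1 h2
  · exact lintegral_Lfn_one μ f0 f1 x n hf0 hf1 hi0 hi1 n le_rfl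
  · exact lintegral_Lfn_one μ f0 f1 x n hf0 hf1 hi0 hi1 _ (by omega)
  · exact lintegral_Lfn_one μ f0 f1 x n hf0 hf1 hi0 hi1 0 (by omega)

variable (hp : p ∈ Set.Ioo (0 : ℝ) 1) (hπ : π ∈ Set.Ioo (0 : ℝ) 1)

include hf0 hf1 hi0 hi1 hp hπ in
lemma nu_univ : nuMeasure μ f0 f1 p π x n Set.univ = 1 := by
  rw [← lintegral_one, nu_lintegral μ f0 f1 p π x n hf0 hf1 _ measurable_const]
  simp only [one_mul]
  simp only [lintegral_ellE_one μ f0 f1 x n hf0 hf1 hi0 hi1, mul_one]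
  exact tsum_prior hp hπ

include hf0 hf1 hi0 hi1 hp hπ in
lemma nu_prob : IsProbabilityMeasure (nuMeasure μ f0 f1 p π x n) :=
  ⟨nu_univ μ f0 f1 p π x n hf0 hf1 hi0 hi1 hp hπ⟩

end Nu
end Stmt8Aux
namespace Stmt8Aux

open MeasureTheory Finset
open scoped NNReal ENNReal

section Decomp

variable {E : Type*} [MeasurableSpace E] (f0 f1 : E → E → ℝ≥0) (p π : ℝ) (x : E) (n m l : ℕ)

/-- tail factor: chain on coordinates `m..n` with `t` final `f1` factors -/
noncomputable def TE (t : ℕ) : (Fin n → E) → ℝ≥0∞ :=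
  fun xs => (Lfn f0 f1 m n t (extvec n x xs) : ℝ≥0∞)

/-- head factor for change point `j ≤ m` -/
noncomputable def headE (j : ℕ) : (Fin n → E) → ℝ≥0∞ :=
  fun xs => (Lfn f0 f1 0 m (m - j + 1) (extvec n x xs) : ℝ≥0∞)

/-- head factor for change point `j > m` -/
noncomputable def H0E : (Fin n → E) → ℝ≥0∞ :=
  fun xs => (Lfn f0 f1 0 m 0 (extvec n x xs) : ℝ≥0∞)

/-- general head factor -/
noncomputable def hdE (j : ℕ) : (Fin n → E) → ℝ≥0∞ :=
  fun xs => if j ≤ m then headE f0 f1 x n m j xs else H0E f0 f1 x n m xs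

/-- number of `f1` factors in the tail given change point `j` -/
def tval (j : ℕ) : ℕ := if j ≤ m then l + 1 else if j ≤ n then n - j + 1 else 0

noncomputable def AE : (Fin n → E) → ℝ≥0∞ :=
  fun xs => ∑ j ∈ Finset.range (m + 1), prior p π j * headE f0 f1 x n m j xs

noncomputable def CE : (Fin n → E) → ℝ≥0∞ :=
  fun xs => ENNReal.ofReal ((1 - π) * p ^ m) * H0E f0 f1 x n m xs

noncomputable def RE : (Fin n → E) → ℝ≥0∞ := fun xs =>
  (∑ i ∈ Finset.range (l + 1),
    ENNReal.ofReal (p ^ (l - i) * (1 - p)) * TE f0 f1 x n m (i + 1) xs) +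
    ENNReal.ofReal (p ^ (l + 1)) * TE f0 f1 x n m 0 xs

noncomputable def NE : (Fin n → E) → ℝ≥0∞ :=
  fun xs => ∑ j ∈ Finset.range (m + 1), prior p π j * ellE f0 f1 x n j xs

noncomputable def DE : (Fin n → E) → ℝ≥0∞ :=
  fun xs => ∑' j, prior p π j * ellE f0 f1 x n j xs

variable (hmln : m + l + 1 = n)

include hmln in
lemma tval_le (j : ℕ) : tval n m l j ≤ l + 1 := by
  unfold tval
  split_ifs <;> omega

include hmln in
lemma ell_decomp (j : ℕ) (xs : Fin n → E) :
    ellE f0 f1 x n j xs = hdE f0 f1 x n m j xs * TE f0 f1 x n m (tval n m l j) xs := by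
  unfold ellE ellDens hdE headE H0E TE tval
  have hmn : m ≤ n := by omega
  rcases Nat.eq_zero_or_pos j with rfl | hj
  · have e := Lfn_split f0 f1 0 m n n (Nat.zero_le _) hmn le_rfl (extvec n x xs)
    rw [show m - (n - n) = m from by omega, show min n (n - m) = l + 1 from by omega] at e
    have e2 := Lfn_sat f0 f1 m (m - 0 + 1) (by omega) (extvec n x xs)
    simp only [if_pos rfl, if_pos (Nat.zero_le m), e, e2, ENNReal.coe_mul, if_true]
  · rcases le_or_gt j m with hjm | hjm
    · have e := Lfn_split f0 f1 0 m n (n - j + 1) (Nat.zero_le _) hmn (by omega) (extvec n x xs)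
      rw [show m - (n - (n - j + 1)) = m - j + 1 from by omega,
        show min (n - j + 1) (n - m) = l + 1 from by omega] at e
      rw [if_neg (by omega), if_pos (by omega : j ≤ n), e]
      simp only [if_pos hjm, ENNReal.coe_mul]
    · rcases le_or_gt j n with hjn | hjn
      · have e := Lfn_split f0 f1 0 m n (n - j + 1) (Nat.zero_le _) hmn (by omega) (extvec n x xs)
        rw [show m - (n - (n - j + 1)) = 0 from by omega,
          show min (n - j + 1) (n - m) = n - j + 1 from by omega] at e
        rw [if_neg (by omega), if_pos hjn, e]
        simp only [if_neg (by omega : ¬ j ≤ m), if_pos hjn, ENNReal.coe_mul]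
      · have e := Lfn_split f0 f1 0 m n 0 (Nat.zero_le _) hmn (by omega) (extvec n x xs)
        rw [show m - (n - 0) = 0 from by omega, show min 0 (n - m) = 0 from by omega] at e
        rw [if_neg (by omega), if_neg (by omega), e]
        simp only [if_neg (by omega : ¬ j ≤ m), if_neg (by omega : ¬ j ≤ n), ENNReal.coe_mul]

include hmln in
lemma NE_eq (xs : Fin n → E) :
    NE f0 f1 p π x n m xs = AE f0 f1 p π x n m xs * TE f0 f1 x n m (l + 1) xs := by
  unfold NE AE
  rw [Finset.sum_mul]
  refine Finset.sum_congr rfl fun j hj => ?_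
  simp only [Finset.mem_range] at hj
  rw [ell_decomp f0 f1 x n m l hmln j xs, mul_assoc]
  unfold hdE tval
  rw [if_pos (by omega : j ≤ m), if_pos (by omega : j ≤ m)]

variable (hp : p ∈ Set.Ioo (0 : ℝ) 1) (hπ : π ∈ Set.Ioo (0 : ℝ) 1)

include hp hπ in
lemma prior_split (i : ℕ) :
    prior p π (m + 1 + i) =
      ENNReal.ofReal ((1 - π) * p ^ m) * ENNReal.ofReal (p ^ i * (1 - p)) := by
  unfold prior
  rw [if_neg (by omega), ← ENNReal.ofReal_mul
    (mul_nonneg (by linarith [hπ.2]) (pow_nonneg hp.1.le _))]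
  congr 1
  rw [show m + 1 + i - 1 = m + i from by omega, pow_add]
  ring

include hmln hp hπ in
lemma tsum_hd (xs : Fin n → E) :
    ∑' j, prior p π j * hdE f0 f1 x n m j xs =
      AE f0 f1 p π x n m xs + CE f0 f1 p π x n m xs := by
  rw [ennreal_tsum_shift _ (m + 1)]
  congr 1
  · refine Finset.sum_congr rfl fun j hj => ?_
    simp only [Finset.mem_range] at hj
    unfold hdE
    rw [if_pos (by omega : j ≤ m)]
  · have h1 : ∀ j : ℕ, prior p π (j + (m + 1)) * hdE f0 f1 x n m (j + (m + 1)) xs =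
        prior p π (j + (m + 1)) * H0E f0 f1 x n m xs := by
      intro j
      unfold hdE
      rw [if_neg (by omega)]
    simp only [h1]
    rw [ENNReal.tsum_mul_right, prior_tail_tsum hp hπ m]
    rfl

include hmln hp hπ in
lemma DE_eq (xs : Fin n → E) :
    DE f0 f1 p π x n xs =
      AE f0 f1 p π x n m xs * TE f0 f1 x n m (l + 1) xs +
        CE f0 f1 p π x n m xs * RE f0 f1 p x n m l xs := by
  unfold DE
  rw [ennreal_tsum_shift _ (n + 1)]
  have htail : ∑' j, prior p π (j + (n + 1)) * ellE f0 f1 x n (j + (n + 1)) xs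
      = CE f0 f1 p π x n m xs * (ENNReal.ofReal (p ^ (l + 1)) * TE f0 f1 x n m 0 xs) := by
    have h1 : ∀ j : ℕ, prior p π (j + (n + 1)) * ellE f0 f1 x n (j + (n + 1)) xs
        = prior p π (j + (n + 1)) * (H0E f0 f1 x n m xs * TE f0 f1 x n m 0 xs) := by
      intro j
      rw [ell_decomp f0 f1 x n m l hmln (j + (n + 1)) xs]
      unfold hdE tval
      rw [if_neg (by omega), if_neg (by omega), if_neg (by omega)]
    simp only [h1]
    rw [ENNReal.tsum_mul_right, prior_tail_tsum hp hπ n]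
    unfold CE
    rw [show (1 - π) * p ^ n = ((1 - π) * p ^ m) * p ^ (l + 1) from by
        rw [← hmln, pow_add]; ring,
      ENNReal.ofReal_mul (mul_nonneg (by linarith [hπ.2]) (pow_nonneg hp.1.le _))]
    ring
  rw [htail]
  have hhead : ∑ j ∈ Finset.range (n + 1), prior p π j * ellE f0 f1 x n j xs
      = AE f0 f1 p π x n m xs * TE f0 f1 x n m (l + 1) xs +
        CE f0 f1 p π x n m xs * (∑ i ∈ Finset.range (l + 1),
          ENNReal.ofReal (p ^ (l - i) * (1 - p)) * TE f0 f1 x n m (i + 1) xs) := by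
    rw [show n + 1 = (m + 1) + (l + 1) from by omega, Finset.sum_range_add]
    congr 1
    · exact NE_eq f0 f1 p π x n m l hmln xs
    · have h2 : ∀ i ∈ Finset.range (l + 1),
          prior p π (m + 1 + i) * ellE f0 f1 x n (m + 1 + i) xs
          = CE f0 f1 p π x n m xs *
            (ENNReal.ofReal (p ^ i * (1 - p)) * TE f0 f1 x n m (l - i + 1) xs) := by
        intro i hi
        simp only [Finset.mem_range] at hi
        rw [ell_decomp f0 f1 x n m l hmln (m + 1 + i) xs]
        unfold hdE tval
        rw [if_neg (by omega), if_neg (by omega), if_pos (by omega : m + 1 + i ≤ n),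
          show n - (m + 1 + i) + 1 = l - i + 1 from by omega,
          prior_split p π m hp hπ i]
        unfold CE
        ring
      rw [Finset.sum_congr rfl h2, ← Finset.mul_sum]
      congr 1
      calc ∑ i ∈ Finset.range (l + 1),
            ENNReal.ofReal (p ^ i * (1 - p)) * TE f0 f1 x n m (l - i + 1) xs
          = ∑ i ∈ Finset.range (l + 1), (fun i' =>
              ENNReal.ofReal (p ^ (l - i') * (1 - p)) * TE f0 f1 x n m (i' + 1) xs)
              (l + 1 - 1 - i) := by
            refine Finset.sum_congr rfl fun i hi => ?_
            simp only [Finset.mem_range] at hi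
            simp only
            rw [show l - (l + 1 - 1 - i) = i from by omega,
              show l + 1 - 1 - i + 1 = l - i + 1 from by omega]
        _ = ∑ i ∈ Finset.range (l + 1),
              ENNReal.ofReal (p ^ (l - i) * (1 - p)) * TE f0 f1 x n m (i + 1) xs :=
          by simpa using Finset.sum_range_reflect
              (fun i' => ENNReal.ofReal (p ^ (l - i') * (1 - p)) * TE f0 f1 x n m (i' + 1) xs)
              (l + 1)
  rw [hhead]
  unfold RE
  ring

end Decomp
end Stmt8Aux
namespace Stmt8Aux

open MeasureTheory Finset
open scoped NNReal ENNReal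

section Integrals

variable {E : Type*} [MeasurableSpace E] (μ : Measure E) [SigmaFinite μ]
  (f0 f1 : E → E → ℝ≥0) (p π : ℝ) (x : E) (n m l : ℕ)

variable (hf0 : Measurable (Function.uncurry f0)) (hf1 : Measurable (Function.uncurry f1))

include hf0 hf1 in
lemma measurable_TE (t : ℕ) : Measurable (TE f0 f1 x n m t) :=
  measurable_Lfn f0 f1 hf0 hf1 x n _ _ _

include hf0 hf1 in
lemma measurable_hdE (j : ℕ) : Measurable (hdE f0 f1 x n m j) := by
  unfold hdE headE H0E
  split_ifs
  · exact measurable_Lfn f0 f1 hf0 hf1 x n _ _ _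
  · exact measurable_Lfn f0 f1 hf0 hf1 x n _ _ _

include hf0 hf1 in
lemma measurable_AE : Measurable (AE f0 f1 p π x n m) :=
  Finset.measurable_sum _ fun j _ =>
    (measurable_Lfn f0 f1 hf0 hf1 x n _ _ _).const_mul _

include hf0 hf1 in
lemma measurable_CE : Measurable (CE f0 f1 p π x n m) :=
  (measurable_Lfn f0 f1 hf0 hf1 x n _ _ _).const_mul _

include hf0 hf1 in
lemma measurable_RE : Measurable (RE f0 f1 p x n m l) :=
  (Finset.measurable_sum _ fun i _ =>
    (measurable_TE f0 f1 x n m hf0 hf1 _).const_mul _).add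
    ((measurable_TE f0 f1 x n m hf0 hf1 _).const_mul _)

include hf0 hf1 in
lemma measurable_NE : Measurable (NE f0 f1 p π x n m) :=
  Finset.measurable_sum _ fun j _ =>
    (measurable_ellE f0 f1 x n hf0 hf1 j).const_mul _

include hf0 hf1 in
lemma measurable_DE : Measurable (DE f0 f1 p π x n) :=
  Measurable.ennreal_tsum fun j => (measurable_ellE f0 f1 x n hf0 hf1 j).const_mul _

lemma hdE_update (j : ℕ) (xs : Fin n → E) (i : Fin n) (y : E) (hi : m ≤ (i : ℕ)) :
    hdE f0 f1 x n m j (Function.update xs i y) = hdE f0 f1 x n m j xs := by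
  unfold hdE headE H0E
  split_ifs
  · rw [Lfn_extvec_update f0 f1 x _ _ _ xs i y hi]
  · rw [Lfn_extvec_update f0 f1 x _ _ _ xs i y hi]

lemma AE_update (xs : Fin n → E) (i : Fin n) (y : E) (hi : m ≤ (i : ℕ)) :
    AE f0 f1 p π x n m (Function.update xs i y) = AE f0 f1 p π x n m xs := by
  unfold AE headE
  refine Finset.sum_congr rfl fun j _ => ?_
  rw [Lfn_extvec_update f0 f1 x _ _ _ xs i y hi]

lemma CE_update (xs : Fin n → E) (i : Fin n) (y : E) (hi : m ≤ (i : ℕ)) :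
    CE f0 f1 p π x n m (Function.update xs i y) = CE f0 f1 p π x n m xs := by
  unfold CE H0E
  rw [Lfn_extvec_update f0 f1 x _ _ _ xs i y hi]

variable (hi0 : ∀ z, ∫⁻ y, (f0 z y : ℝ≥0∞) ∂μ = 1) (hi1 : ∀ z, ∫⁻ y, (f1 z y : ℝ≥0∞) ∂μ = 1)
variable (hmln : m + l + 1 = n)

include hf0 hf1 hi0 hi1 hmln in
lemma collapse_tail (t : ℕ) (ht : t ≤ l + 1) (h : (Fin n → E) → ℝ≥0∞) (hh : Measurable h)
    (hdep : ∀ (xs : Fin n → E) (i : Fin n) (y : E), m ≤ (i : ℕ) →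
      h (Function.update xs i y) = h xs) :
    ∫⁻ xs, h xs * TE f0 f1 x n m t xs ∂(PiM μ n) =
      ∫⁻ xs, h xs * TE f0 f1 x n m 0 xs ∂(PiM μ n) := by
  have hmn : m ≤ n := by omega
  have sel : ∀ t', t' ≤ l + 1 → ∀ xs : Fin n → E, TE f0 f1 x n m t' xs =
      ∏ r ∈ Finset.Icc (m + 1) n,
        ((cond (decide (n - t' < r)) f1 f0) (extvec n x xs (r - 1)) (extvec n x xs r) : ℝ≥0∞) :=
    fun t' ht' xs => Lfn_selector f0 f1 m n t' (by omega) (by omega) (extvec n x xs)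
  rw [PiM]
  simp only [fun xs => sel t ht xs, fun xs => sel 0 (by omega) xs]
  rw [chain_collapse μ f0 f1 hf0 hf1 hi0 hi1 x n m hmn _ h hh hdep,
    chain_collapse μ f0 f1 hf0 hf1 hi0 hi1 x n m hmn _ h hh hdep]

include hf0 hf1 hi0 hi1 hmln in
lemma lintegral_h_ellE (j : ℕ) (h : (Fin n → E) → ℝ≥0∞) (hh : Measurable h)
    (hdep : ∀ (xs : Fin n → E) (i : Fin n) (y : E), m ≤ (i : ℕ) →
      h (Function.update xs i y) = h xs) :
    ∫⁻ xs, h xs * ellE f0 f1 x n j xs ∂(PiM μ n) =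
      ∫⁻ xs, (h xs * hdE f0 f1 x n m j xs) * TE f0 f1 x n m 0 xs ∂(PiM μ n) := by
  have e1 : ∀ xs, h xs * ellE f0 f1 x n j xs =
      (h xs * hdE f0 f1 x n m j xs) * TE f0 f1 x n m (tval n m l j) xs := by
    intro xs
    rw [ell_decomp f0 f1 x n m l hmln j xs, mul_assoc]
  simp only [e1]
  exact collapse_tail μ f0 f1 x n m l hf0 hf1 hi0 hi1 hmln _ (tval_le n m l hmln j)
    _ (hh.mul (measurable_hdE f0 f1 x n m hf0 hf1 j))
    (fun xs i y hi => by rw [hdE_update f0 f1 x n m j xs i y hi, hdep xs i y hi])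

include hf0 hf1 hi0 hi1 hmln in
lemma tsum_lintegral_ellE (h : (Fin n → E) → ℝ≥0∞) (hh : Measurable h)
    (hdep : ∀ (xs : Fin n → E) (i : Fin n) (y : E), m ≤ (i : ℕ) →
      h (Function.update xs i y) = h xs)
    (hp : p ∈ Set.Ioo (0 : ℝ) 1) (hπ : π ∈ Set.Ioo (0 : ℝ) 1) :
    ∑' j, prior p π j * ∫⁻ xs, h xs * ellE f0 f1 x n j xs ∂(PiM μ n) =
      ∫⁻ xs, h xs * ((AE f0 f1 p π x n m xs + CE f0 f1 p π x n m xs) *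
        TE f0 f1 x n m 0 xs) ∂(PiM μ n) := by
  have e1 : ∀ j, prior p π j * ∫⁻ xs, h xs * ellE f0 f1 x n j xs ∂(PiM μ n) =
      ∫⁻ xs, (h xs * TE f0 f1 x n m 0 xs) * (prior p π j * hdE f0 f1 x n m j xs)
        ∂(PiM μ n) := by
    intro j
    rw [lintegral_h_ellE μ f0 f1 x n m l hf0 hf1 hi0 hi1 hmln j h hh hdep,
      ← lintegral_const_mul' _ _ (by unfold prior; split_ifs <;> exact ENNReal.ofReal_ne_top)]
    refine lintegral_congr fun xs => ?_
    ring
  simp only [e1]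
  rw [← lintegral_tsum (f := fun j xs => h xs * TE f0 f1 x n m 0 xs *
    (prior p π j * hdE f0 f1 x n m j xs)) fun j => (((hh.mul (measurable_TE f0 f1 x n m hf0 hf1 0)).mul
    ((measurable_hdE f0 f1 x n m hf0 hf1 j).const_mul _))).aemeasurable]
  refine lintegral_congr fun xs => ?_
  rw [ENNReal.tsum_mul_left, tsum_hd f0 f1 p π x n m l hmln hp hπ xs]
  ring

include hf0 hf1 hi0 hi1 hmln in
lemma sum_lintegral_ellE (h : (Fin n → E) → ℝ≥0∞) (hh : Measurable h)
    (hdep : ∀ (xs : Fin n → E) (i : Fin n) (y : E), m ≤ (i : ℕ) →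
      h (Function.update xs i y) = h xs) :
    ∑ j ∈ Finset.range (m + 1), prior p π j * ∫⁻ xs, h xs * ellE f0 f1 x n j xs ∂(PiM μ n) =
      ∫⁻ xs, h xs * (AE f0 f1 p π x n m xs * TE f0 f1 x n m 0 xs) ∂(PiM μ n) := by
  have e1 : ∀ j ∈ Finset.range (m + 1),
      prior p π j * ∫⁻ xs, h xs * ellE f0 f1 x n j xs ∂(PiM μ n) =
      ∫⁻ xs, (h xs * TE f0 f1 x n m 0 xs) * (prior p π j * hdE f0 f1 x n m j xs)
        ∂(PiM μ n) := by
    intro j _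
    rw [lintegral_h_ellE μ f0 f1 x n m l hf0 hf1 hi0 hi1 hmln j h hh hdep,
      ← lintegral_const_mul' _ _ (by unfold prior; split_ifs <;> exact ENNReal.ofReal_ne_top)]
    refine lintegral_congr fun xs => ?_
    ring
  rw [Finset.sum_congr rfl e1, ← lintegral_finset_sum (f := fun j xs => h xs * TE f0 f1 x n m 0 xs *
    (prior p π j * hdE f0 f1 x n m j xs)) _ fun j _ =>
    ((hh.mul (measurable_TE f0 f1 x n m hf0 hf1 0)).mul
      ((measurable_hdE f0 f1 x n m hf0 hf1 j).const_mul _))]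
  refine lintegral_congr fun xs => ?_
  rw [← Finset.mul_sum]
  unfold AE
  have e2 : ∀ j ∈ Finset.range (m + 1), prior p π j * hdE f0 f1 x n m j xs =
      prior p π j * headE f0 f1 x n m j xs := by
    intro j hj
    simp only [Finset.mem_range] at hj
    unfold hdE
    rw [if_pos (by omega : j ≤ m)]
  rw [Finset.sum_congr rfl e2]
  ring

include hf0 hf1 hi0 hi1 hmln in
lemma lintegral_ACT (hp : p ∈ Set.Ioo (0 : ℝ) 1) (hπ : π ∈ Set.Ioo (0 : ℝ) 1) :
    ∫⁻ xs, (AE f0 f1 p π x n m xs + CE f0 f1 p π x n m xs) * TE f0 f1 x n m 0 xs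
      ∂(PiM μ n) = 1 := by
  have := tsum_lintegral_ellE μ f0 f1 p π x n m l hf0 hf1 hi0 hi1 hmln
    (fun _ => 1) measurable_const (fun _ _ _ _ => rfl) hp hπ
  simp only [one_mul] at this
  rw [← this]
  simp only [lintegral_ellE_one μ f0 f1 x n hf0 hf1 hi0 hi1, mul_one]
  exact tsum_prior hp hπ

include hf0 hf1 hi0 hi1 in
lemma lintegral_DE (hp : p ∈ Set.Ioo (0 : ℝ) 1) (hπ : π ∈ Set.Ioo (0 : ℝ) 1) :
    ∫⁻ xs, DE f0 f1 p π x n xs ∂(PiM μ n) = 1 := by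
  unfold DE
  rw [lintegral_tsum fun j => ((measurable_ellE f0 f1 x n hf0 hf1 j).const_mul _).aemeasurable]
  have e1 : ∀ j : ℕ, ∫⁻ xs, prior p π j * ellE f0 f1 x n j xs ∂(PiM μ n) = prior p π j := by
    intro j
    rw [lintegral_const_mul' _ _ (by unfold prior; split_ifs <;> exact ENNReal.ofReal_ne_top),
      lintegral_ellE_one μ f0 f1 x n hf0 hf1 hi0 hi1 j, mul_one]
  simp only [e1]
  exact tsum_prior hp hπ

end Integrals
end Stmt8Aux
namespace Stmt8Aux

open MeasureTheory Finset
open scoped NNReal ENNReal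

section Filtration

variable {E : Type*} [MeasurableSpace E] (μ : Measure E) [SigmaFinite μ]
  (f0 f1 : E → E → ℝ≥0) (p π : ℝ) (x : E) (n m l : ℕ)

/-- projection onto the first `m'` observation coordinates -/
def Proj (m' : ℕ) (hmn : m' ≤ n) : ℕ × (Fin n → E) → (Fin m' → E) :=
  fun ω => fun i => ω.2 (Fin.castLE hmn i)

/-- same, on the observation space -/
def projX (m' : ℕ) (hmn : m' ≤ n) : (Fin n → E) → (Fin m' → E) :=
  fun xs => fun i => xs (Fin.castLE hmn i)

lemma measurable_Proj (m' : ℕ) (hmn : m' ≤ n) : Measurable (Proj (E := E) n m' hmn) :=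
  measurable_pi_lambda _ fun i => (measurable_pi_apply _).comp measurable_snd

lemma measurable_projX (m' : ℕ) (hmn : m' ≤ n) : Measurable (projX (E := E) n m' hmn) :=
  measurable_pi_lambda _ fun i => measurable_pi_apply _

lemma Ffil_eq_comap (m' : ℕ) (hmn : m' ≤ n) :
    Ffil (E := E) n m' hmn = MeasurableSpace.comap (Proj n m' hmn) inferInstance := rfl

lemma Ffil_le (m' : ℕ) (hmn : m' ≤ n) :
    Ffil (E := E) n m' hmn ≤ (inferInstance : MeasurableSpace (ℕ × (Fin n → E))) := by
  intro s hs
  rw [Ffil_eq_comap, MeasurableSpace.measurableSet_comap] at hs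
  obtain ⟨t, ht, rfl⟩ := hs
  exact measurable_Proj n m' hmn ht

lemma projX_update (m' : ℕ) (hmn : m' ≤ n) (xs : Fin n → E) (i : Fin n) (y : E)
    (hi : m' ≤ (i : ℕ)) :
    projX n m' hmn (Function.update xs i y) = projX n m' hmn xs := by
  funext j
  unfold projX
  rw [Function.update_of_ne]
  simp only [ne_eq, Fin.ext_iff, Fin.coe_castLE]
  have := j.isLt
  omega

lemma Proj_preimage (m' : ℕ) (hmn : m' ≤ n) (t : Set (Fin m' → E)) (j : ℕ) (xs : Fin n → E) :
    ((j, xs) ∈ Proj n m' hmn ⁻¹' t) ↔ xs ∈ projX n m' hmn ⁻¹' t := Iff.rfl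

lemma mset_theta (k : ℕ) : MeasurableSet {ω' : ℕ × (Fin n → E) | ω'.1 ≤ k} := by
  have : {ω' : ℕ × (Fin n → E) | ω'.1 ≤ k} = Prod.fst ⁻¹' {j : ℕ | j ≤ k} := rfl
  rw [this]
  exact measurable_fst (MeasurableSet.of_discrete)

variable (hf0 : Measurable (Function.uncurry f0)) (hf1 : Measurable (Function.uncurry f1))

include hf0 hf1 in
lemma nu_restrict_lintegral (m' : ℕ) (hmn : m' ≤ n) (t : Set (Fin m' → E))
    (ht : MeasurableSet t) (φ : (Fin n → E) → ℝ≥0∞) (hφ : Measurable φ) :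
    ∫⁻ ω in Proj n m' hmn ⁻¹' t, φ ω.2 ∂(nuMeasure μ f0 f1 p π x n) =
      ∑' j, prior p π j *
        ∫⁻ xs, Set.indicator (projX n m' hmn ⁻¹' t) (fun _ => 1) xs * φ xs *
          ellE f0 f1 x n j xs ∂(PiM μ n) := by
  rw [← lintegral_indicator ((measurable_Proj n m' hmn) ht)]
  rw [nu_lintegral μ f0 f1 p π x n hf0 hf1
    ((Proj n m' hmn ⁻¹' t).indicator fun ω => φ ω.2)
    ((hφ.comp measurable_snd).indicator ((measurable_Proj n m' hmn) ht))]
  refine tsum_congr fun j => ?_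
  congr 1
  refine lintegral_congr fun xs => ?_
  congr 1
  by_cases hxs : xs ∈ projX n m' hmn ⁻¹' t
  · rw [Set.indicator_of_mem (by exact hxs), Set.indicator_of_mem hxs, one_mul]
  · rw [Set.indicator_of_notMem (by exact hxs), Set.indicator_of_notMem hxs, zero_mul]

include hf0 hf1 in
lemma nu_inter_theta (m' : ℕ) (hmn : m' ≤ n) (k : ℕ) (t : Set (Fin m' → E))
    (ht : MeasurableSet t) :
    nuMeasure μ f0 f1 p π x n ({ω' : ℕ × (Fin n → E) | ω'.1 ≤ k} ∩ Proj n m' hmn ⁻¹' t) =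
      ∑ j ∈ Finset.range (k + 1), prior p π j *
        ∫⁻ xs, Set.indicator (projX n m' hmn ⁻¹' t) (fun _ => 1) xs *
          ellE f0 f1 x n j xs ∂(PiM μ n) := by
  have hS : MeasurableSet ({ω' : ℕ × (Fin n → E) | ω'.1 ≤ k} ∩ Proj n m' hmn ⁻¹' t) :=
    (mset_theta n k).inter ((measurable_Proj n m' hmn) ht)
  rw [← lintegral_indicator_one hS,
    nu_lintegral μ f0 f1 p π x n hf0 hf1 _ (measurable_one.indicator hS)]
  rw [tsum_eq_sum (s := Finset.range (k + 1)) ?hzero]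
  case hzero =>
    intro j hj
    simp only [Finset.mem_range, not_lt] at hj
    have : ∀ xs : Fin n → E,
        Set.indicator ({ω' : ℕ × (Fin n → E) | ω'.1 ≤ k} ∩ Proj n m' hmn ⁻¹' t)
          (1 : ℕ × (Fin n → E) → ℝ≥0∞) (j, xs) = 0 := by
      intro xs
      rw [Set.indicator_of_notMem]
      rintro ⟨h1, -⟩
      simp only [Set.mem_setOf_eq] at h1
      omega
    simp only [this, zero_mul, lintegral_zero, mul_zero]
  refine Finset.sum_congr rfl fun j hj => ?_
  simp only [Finset.mem_range] at hj
  congr 1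
  refine lintegral_congr fun xs => ?_
  congr 1
  by_cases hxs : xs ∈ projX n m' hmn ⁻¹' t
  · have hmem : ((j, xs) : ℕ × (Fin n → E)) ∈
        {ω' : ℕ × (Fin n → E) | ω'.1 ≤ k} ∩ Proj n m' hmn ⁻¹' t :=
      ⟨by simp only [Set.mem_setOf_eq]; omega, hxs⟩
    rw [Set.indicator_of_mem hmem, Set.indicator_of_mem hxs]
    rfl
  · have hnm : ((j, xs) : ℕ × (Fin n → E)) ∉
        {ω' : ℕ × (Fin n → E) | ω'.1 ≤ k} ∩ Proj n m' hmn ⁻¹' t := by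
      rintro ⟨-, h2⟩
      exact hxs h2
    rw [Set.indicator_of_notMem hnm, Set.indicator_of_notMem hxs]

end Filtration
end Stmt8Aux
namespace Stmt8Aux

open MeasureTheory Finset
open scoped NNReal ENNReal

section SetIntegrals

variable {E : Type*} [MeasurableSpace E] (μ : Measure E) [SigmaFinite μ]
  (f0 f1 : E → E → ℝ≥0) (p π : ℝ) (x : E) (n m l : ℕ)

/-- candidate density for `ν(θ ≤ m | 𝓕_n)` -/
noncomputable def hatN : (Fin n → E) → ℝ≥0∞ :=
  fun xs => NE f0 f1 p π x n m xs / DE f0 f1 p π x n xs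

/-- candidate density for `ν(θ ≤ m | 𝓕_m)` -/
noncomputable def hatM : (Fin n → E) → ℝ≥0∞ :=
  fun xs => AE f0 f1 p π x n m xs / (AE f0 f1 p π x n m xs + CE f0 f1 p π x n m xs)

lemma NE_le_DE (xs : Fin n → E) : NE f0 f1 p π x n m xs ≤ DE f0 f1 p π x n xs :=
  ENNReal.sum_le_tsum _

lemma hatN_le_one (xs : Fin n → E) : hatN f0 f1 p π x n m xs ≤ 1 :=
  ENNReal.div_le_of_le_mul (by rw [one_mul]; exact NE_le_DE f0 f1 p π x n m xs)

lemma hatM_le_one (xs : Fin n → E) : hatM f0 f1 p π x n m xs ≤ 1 :=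
  ENNReal.div_le_of_le_mul (by rw [one_mul]; exact le_self_add)

variable (hf0 : Measurable (Function.uncurry f0)) (hf1 : Measurable (Function.uncurry f1))

include hf0 hf1 in
lemma measurable_hatN : Measurable (hatN f0 f1 p π x n m) :=
  (measurable_NE f0 f1 p π x n m hf0 hf1).div (measurable_DE f0 f1 p π x n hf0 hf1)

include hf0 hf1 in
lemma measurable_hatM : Measurable (hatM f0 f1 p π x n m) :=
  (measurable_AE f0 f1 p π x n m hf0 hf1).div
    ((measurable_AE f0 f1 p π x n m hf0 hf1).add (measurable_CE f0 f1 p π x n m hf0 hf1))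

include hf0 hf1 in
lemma tsum_to_DE (F : (Fin n → E) → ℝ≥0∞) (hF : Measurable F) :
    ∑' j, prior p π j * ∫⁻ xs, F xs * ellE f0 f1 x n j xs ∂(PiM μ n) =
      ∫⁻ xs, F xs * DE f0 f1 p π x n xs ∂(PiM μ n) := by
  have e1 : ∀ j : ℕ, prior p π j * ∫⁻ xs, F xs * ellE f0 f1 x n j xs ∂(PiM μ n) =
      ∫⁻ xs, F xs * (prior p π j * ellE f0 f1 x n j xs) ∂(PiM μ n) := by
    intro j
    rw [← lintegral_const_mul' _ _ (by unfold prior; split_ifs <;> exact ENNReal.ofReal_ne_top)]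
    refine lintegral_congr fun xs => ?_
    ring
  simp only [e1]
  rw [← lintegral_tsum (f := fun j xs => F xs * (prior p π j * ellE f0 f1 x n j xs)) fun j =>
    (hF.mul ((measurable_ellE f0 f1 x n hf0 hf1 j).const_mul _)).aemeasurable]
  refine lintegral_congr fun xs => ?_
  rw [ENNReal.tsum_mul_left]
  rfl

include hf0 hf1 in
lemma lintegral_FNE (F : (Fin n → E) → ℝ≥0∞) (hF : Measurable F) :
    ∫⁻ xs, F xs * NE f0 f1 p π x n m xs ∂(PiM μ n) =
      ∑ j ∈ Finset.range (m + 1), prior p π j *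
        ∫⁻ xs, F xs * ellE f0 f1 x n j xs ∂(PiM μ n) := by
  have e1 : ∀ xs, F xs * NE f0 f1 p π x n m xs =
      ∑ j ∈ Finset.range (m + 1), F xs * (prior p π j * ellE f0 f1 x n j xs) := by
    intro xs
    unfold NE
    rw [Finset.mul_sum]
  simp only [e1]
  rw [lintegral_finset_sum (f := fun j xs => F xs * (prior p π j * ellE f0 f1 x n j xs)) _ fun j _ =>
    hF.mul ((measurable_ellE f0 f1 x n hf0 hf1 j).const_mul _)]
  refine Finset.sum_congr rfl fun j _ => ?_
  rw [← lintegral_const_mul' _ _ (by unfold prior; split_ifs <;> exact ENNReal.ofReal_ne_top)]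
  refine lintegral_congr fun xs => ?_
  ring

variable (hi0 : ∀ z, ∫⁻ y, (f0 z y : ℝ≥0∞) ∂μ = 1) (hi1 : ∀ z, ∫⁻ y, (f1 z y : ℝ≥0∞) ∂μ = 1)
  (hp : p ∈ Set.Ioo (0 : ℝ) 1) (hπ : π ∈ Set.Ioo (0 : ℝ) 1)

include hf0 hf1 hi0 hi1 hp hπ in
lemma ae_DE_lt_top : ∀ᵐ xs ∂(PiM μ n), DE f0 f1 p π x n xs < ∞ :=
  ae_lt_top (measurable_DE f0 f1 p π x n hf0 hf1)
    (by rw [lintegral_DE μ f0 f1 p π x n hf0 hf1 hi0 hi1 hp hπ]; exact ENNReal.one_ne_top)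

variable (hmln : m + l + 1 = n)

include hf0 hf1 hi0 hi1 hp hπ hmln in
lemma ae_ACT_lt_top : ∀ᵐ xs ∂(PiM μ n),
    (AE f0 f1 p π x n m xs + CE f0 f1 p π x n m xs) * TE f0 f1 x n m 0 xs < ∞ :=
  ae_lt_top (((measurable_AE f0 f1 p π x n m hf0 hf1).add
      (measurable_CE f0 f1 p π x n m hf0 hf1)).mul (measurable_TE f0 f1 x n m hf0 hf1 0))
    (by rw [lintegral_ACT μ f0 f1 p π x n m l hf0 hf1 hi0 hi1 hmln hp hπ]
        exact ENNReal.one_ne_top)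

-- pointwise algebra in ℝ≥0∞
lemma hatN_mul_DE (xs : Fin n → E) (hfin : DE f0 f1 p π x n xs < ∞) :
    hatN f0 f1 p π x n m xs * DE f0 f1 p π x n xs = NE f0 f1 p π x n m xs := by
  rcases eq_or_ne (DE f0 f1 p π x n xs) 0 with h0 | h0
  · have hN : NE f0 f1 p π x n m xs = 0 :=
      le_antisymm (h0 ▸ NE_le_DE f0 f1 p π x n m xs) (zero_le ..)
    rw [h0, hN, mul_zero]
  · unfold hatN
    rw [ENNReal.div_mul_cancel h0 hfin.ne]

lemma hatM_mul_ACT (xs : Fin n → E)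
    (hfin : (AE f0 f1 p π x n m xs + CE f0 f1 p π x n m xs) * TE f0 f1 x n m 0 xs < ∞) :
    hatM f0 f1 p π x n m xs *
      ((AE f0 f1 p π x n m xs + CE f0 f1 p π x n m xs) * TE f0 f1 x n m 0 xs) =
      AE f0 f1 p π x n m xs * TE f0 f1 x n m 0 xs := by
  set a := AE f0 f1 p π x n m xs
  set c := CE f0 f1 p π x n m xs
  set t0 := TE f0 f1 x n m 0 xs
  rcases eq_or_ne (a + c) 0 with h0 | h0
  · have ha : a = 0 := by
      rcases add_eq_zero.mp h0 with ⟨ha, -⟩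
      exact ha
    unfold hatM
    rw [show AE f0 f1 p π x n m xs = a from rfl, ha, ENNReal.zero_div, zero_mul, zero_mul]
  · rcases eq_or_ne (a + c) ∞ with hT | hT
    · have ht0 : t0 = 0 := by
        by_contra ht0
        rw [hT, ENNReal.top_mul ht0] at hfin
        exact absurd hfin (lt_irrefl _)
      rw [ht0, mul_zero, mul_zero, mul_zero]
    · unfold hatM
      rw [← mul_assoc]
      rw [show AE f0 f1 p π x n m xs = a from rfl, show CE f0 f1 p π x n m xs = c from rfl,
        ENNReal.div_mul_cancel h0 hT]

end SetIntegrals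
end Stmt8Aux
namespace Stmt8Aux

open MeasureTheory Finset
open scoped NNReal ENNReal

section CharInt

variable {E : Type*} [MeasurableSpace E] (μ : Measure E) [SigmaFinite μ]
  (f0 f1 : E → E → ℝ≥0) (p π : ℝ) (x : E) (n m l : ℕ)
  (hf0 : Measurable (Function.uncurry f0)) (hf1 : Measurable (Function.uncurry f1))
  (hi0 : ∀ z, ∫⁻ y, (f0 z y : ℝ≥0∞) ∂μ = 1) (hi1 : ∀ z, ∫⁻ y, (f1 z y : ℝ≥0∞) ∂μ = 1)
  (hp : p ∈ Set.Ioo (0 : ℝ) 1) (hπ : π ∈ Set.Ioo (0 : ℝ) 1) (hmln : m + l + 1 = n)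

include hf0 hf1 in
lemma setIntegral_ind (m' : ℕ) (hmn : m' ≤ n) (t : Set (Fin m' → E)) (ht : MeasurableSet t) :
    ∫ ω in Proj n m' hmn ⁻¹' t,
        Set.indicator {ω' : ℕ × (Fin n → E) | ω'.1 ≤ m} (fun _ => (1 : ℝ)) ω
        ∂(nuMeasure μ f0 f1 p π x n) =
      (∑ j ∈ Finset.range (m + 1), prior p π j *
        ∫⁻ xs, Set.indicator (projX n m' hmn ⁻¹' t) (fun _ => 1) xs *
          ellE f0 f1 x n j xs ∂(PiM μ n)).toReal := by
  rw [integral_indicator_const (1 : ℝ) (mset_theta n m), measureReal_def,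
    Measure.restrict_apply (mset_theta n m),
    nu_inter_theta μ f0 f1 p π x n hf0 hf1 m' hmn m t ht, smul_eq_mul, mul_one]

include hf0 hf1 hi0 hi1 hp hπ in
lemma setIntegral_gN (t : Set (Fin n → E)) (ht : MeasurableSet t) :
    ∫ ω in Proj n n le_rfl ⁻¹' t, (hatN f0 f1 p π x n m ω.2).toReal
        ∂(nuMeasure μ f0 f1 p π x n) =
      (∑ j ∈ Finset.range (m + 1), prior p π j *
        ∫⁻ xs, Set.indicator (projX n n le_rfl ⁻¹' t) (fun _ => 1) xs *
          ellE f0 f1 x n j xs ∂(PiM μ n)).toReal := by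
  rw [integral_eq_lintegral_of_nonneg_ae (ae_of_all _ fun ω => ENNReal.toReal_nonneg)
    ((Measurable.ennreal_toReal (show Measurable fun ω : ℕ × (Fin n → E) =>
        hatN f0 f1 p π x n m ω.2 from
      (measurable_hatN f0 f1 p π x n m hf0 hf1).comp measurable_snd)).aestronglyMeasurable)]
  congr 1
  have hofReal : ∀ ω : ℕ × (Fin n → E),
      ENNReal.ofReal ((hatN f0 f1 p π x n m ω.2).toReal) = hatN f0 f1 p π x n m ω.2 :=
    fun ω => ENNReal.ofReal_toReal
      (((hatN_le_one f0 f1 p π x n m ω.2).trans_lt ENNReal.one_lt_top).ne)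
  simp only [hofReal]
  rw [nu_restrict_lintegral μ f0 f1 p π x n hf0 hf1 n le_rfl t ht
    (hatN f0 f1 p π x n m) (measurable_hatN f0 f1 p π x n m hf0 hf1)]
  rw [tsum_to_DE μ f0 f1 p π x n hf0 hf1
    (fun xs => Set.indicator (projX n n le_rfl ⁻¹' t) (fun _ => 1) xs *
      hatN f0 f1 p π x n m xs)
    ((measurable_one.indicator ((measurable_projX n n le_rfl) ht)).mul
      (measurable_hatN f0 f1 p π x n m hf0 hf1))]
  rw [← lintegral_FNE μ f0 f1 p π x n m hf0 hf1
    (fun xs => Set.indicator (projX n n le_rfl ⁻¹' t) (fun _ => 1) xs)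
    (measurable_one.indicator ((measurable_projX n n le_rfl) ht))]
  refine lintegral_congr_ae ?_
  filter_upwards [ae_DE_lt_top μ f0 f1 p π x n hf0 hf1 hi0 hi1 hp hπ] with xs hfin
  rw [mul_assoc, hatN_mul_DE f0 f1 p π x n m xs hfin]

include hf0 hf1 hi0 hi1 hp hπ hmln in
lemma setIntegral_gM (hmn : m ≤ n) (t : Set (Fin m → E)) (ht : MeasurableSet t) :
    ∫ ω in Proj n m hmn ⁻¹' t, (hatM f0 f1 p π x n m ω.2).toReal
        ∂(nuMeasure μ f0 f1 p π x n) =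
      (∑ j ∈ Finset.range (m + 1), prior p π j *
        ∫⁻ xs, Set.indicator (projX n m hmn ⁻¹' t) (fun _ => 1) xs *
          ellE f0 f1 x n j xs ∂(PiM μ n)).toReal := by
  rw [integral_eq_lintegral_of_nonneg_ae (ae_of_all _ fun ω => ENNReal.toReal_nonneg)
    ((Measurable.ennreal_toReal (show Measurable fun ω : ℕ × (Fin n → E) =>
        hatM f0 f1 p π x n m ω.2 from
      (measurable_hatM f0 f1 p π x n m hf0 hf1).comp measurable_snd)).aestronglyMeasurable)]
  congr 1
  have hofReal : ∀ ω : ℕ × (Fin n → E),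
      ENNReal.ofReal ((hatM f0 f1 p π x n m ω.2).toReal) = hatM f0 f1 p π x n m ω.2 :=
    fun ω => ENNReal.ofReal_toReal
      (((hatM_le_one f0 f1 p π x n m ω.2).trans_lt ENNReal.one_lt_top).ne)
  simp only [hofReal]
  rw [nu_restrict_lintegral μ f0 f1 p π x n hf0 hf1 m hmn t ht
    (hatM f0 f1 p π x n m) (measurable_hatM f0 f1 p π x n m hf0 hf1)]
  rw [tsum_lintegral_ellE μ f0 f1 p π x n m l hf0 hf1 hi0 hi1 hmln
    (fun xs => Set.indicator (projX n m hmn ⁻¹' t) (fun _ => 1) xs *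
      hatM f0 f1 p π x n m xs)
    ((measurable_one.indicator ((measurable_projX n m hmn) ht)).mul
      (measurable_hatM f0 f1 p π x n m hf0 hf1))
    (fun xs i y hi => by
      classical
      have h1 : (projX n m hmn ⁻¹' t).indicator (fun _ => (1 : ℝ≥0∞)) (Function.update xs i y) =
          (projX n m hmn ⁻¹' t).indicator (fun _ => (1 : ℝ≥0∞)) xs := by
        rw [Set.indicator_apply, Set.indicator_apply, Set.mem_preimage, Set.mem_preimage,
          projX_update n m hmn xs i y hi]
      show (projX n m hmn ⁻¹' t).indicator (fun _ => (1 : ℝ≥0∞)) (Function.update xs i y) *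
          hatM f0 f1 p π x n m (Function.update xs i y) = _
      unfold hatM
      rw [h1, AE_update f0 f1 p π x n m xs i y hi, CE_update f0 f1 p π x n m xs i y hi])
    hp hπ]
  rw [sum_lintegral_ellE μ f0 f1 p π x n m l hf0 hf1 hi0 hi1 hmln
    (fun xs => Set.indicator (projX n m hmn ⁻¹' t) (fun _ => 1) xs)
    (measurable_one.indicator ((measurable_projX n m hmn) ht))
    (fun xs i y hi => by
      classical
      show (projX n m hmn ⁻¹' t).indicator (fun _ => (1 : ℝ≥0∞)) (Function.update xs i y) =
        (projX n m hmn ⁻¹' t).indicator (fun _ => (1 : ℝ≥0∞)) xs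
      rw [Set.indicator_apply, Set.indicator_apply, Set.mem_preimage, Set.mem_preimage,
        projX_update n m hmn xs i y hi])]
  refine lintegral_congr_ae ?_
  filter_upwards [ae_ACT_lt_top μ f0 f1 p π x n m l hf0 hf1 hi0 hi1 hp hπ hmln] with xs hfin
  rw [mul_assoc, hatM_mul_ACT f0 f1 p π x n m xs hfin]

end CharInt
end Stmt8Aux
namespace Stmt8Aux

open MeasureTheory Finset
open scoped NNReal ENNReal

section CondExp

variable {E : Type*} [MeasurableSpace E] (μ : Measure E) [SigmaFinite μ]
  (f0 f1 : E → E → ℝ≥0) (p π : ℝ) (x : E) (n m l : ℕ)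

lemma extvec_congr (m' : ℕ) (hmn : m' ≤ n) (xs ys : Fin n → E)
    (h : ∀ i : Fin n, (i : ℕ) < m' → xs i = ys i) (r : ℕ) (hr : r ≤ m') :
    extvec n x xs r = extvec n x ys r := by
  unfold extvec
  by_cases hc : 1 ≤ r ∧ r ≤ n
  · simp only [dif_pos hc]
    exact h ⟨r - 1, by omega⟩ (by simp only [Fin.val_mk]; omega)
  · simp only [dif_neg hc]

lemma Lfn_head_congr (m' : ℕ) (hmn : m' ≤ n) (t : ℕ) (xs ys : Fin n → E)
    (h : ∀ i : Fin n, (i : ℕ) < m' → xs i = ys i) :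
    Lfn f0 f1 0 m' t (extvec n x xs) = Lfn f0 f1 0 m' t (extvec n x ys) := by
  unfold Lfn
  congr 1
  · refine Finset.prod_congr rfl fun r hr => ?_
    simp only [Finset.mem_Icc] at hr
    rw [extvec_congr x n m' hmn xs ys h (r - 1) (by omega),
      extvec_congr x n m' hmn xs ys h r (by omega)]
  · refine Finset.prod_congr rfl fun r hr => ?_
    simp only [Finset.mem_Icc] at hr
    rw [extvec_congr x n m' hmn xs ys h (r - 1) (by omega),
      extvec_congr x n m' hmn xs ys h r (by omega)]

lemma AE_congr (hmn : m ≤ n) (xs ys : Fin n → E)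
    (h : ∀ i : Fin n, (i : ℕ) < m → xs i = ys i) :
    AE f0 f1 p π x n m xs = AE f0 f1 p π x n m ys := by
  unfold AE headE
  refine Finset.sum_congr rfl fun j _ => ?_
  rw [Lfn_head_congr f0 f1 x n m hmn _ xs ys h]

lemma CE_congr (hmn : m ≤ n) (xs ys : Fin n → E)
    (h : ∀ i : Fin n, (i : ℕ) < m → xs i = ys i) :
    CE f0 f1 p π x n m xs = CE f0 f1 p π x n m ys := by
  unfold CE H0E
  rw [Lfn_head_congr f0 f1 x n m hmn _ xs ys h]

/-- extension of a partial observation vector by the constant `x` -/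
def extC (m' : ℕ) : (Fin m' → E) → (Fin n → E) := fun v i =>
  if h : (i : ℕ) < m' then v ⟨i, h⟩ else x

lemma measurable_extC (m' : ℕ) : Measurable (extC (E := E) x n m') := by
  refine measurable_pi_lambda _ fun i => ?_
  unfold extC
  by_cases h : (i : ℕ) < m'
  · simpa only [dif_pos h] using measurable_pi_apply _
  · simpa only [dif_neg h] using measurable_const

lemma agree_extC_projX (m' : ℕ) (hmn : m' ≤ n) (xs : Fin n → E) :
    ∀ i : Fin n, (i : ℕ) < m' → extC x n m' (projX n m' hmn xs) i = xs i := by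
  intro i hi
  unfold extC projX
  rw [dif_pos hi]
  have : (Fin.castLE hmn ⟨(i : ℕ), hi⟩) = i := Fin.ext (by simp)
  rw [this]


variable (hf0 : Measurable (Function.uncurry f0)) (hf1 : Measurable (Function.uncurry f1))
  (hi0 : ∀ z, ∫⁻ y, (f0 z y : ℝ≥0∞) ∂μ = 1) (hi1 : ∀ z, ∫⁻ y, (f1 z y : ℝ≥0∞) ∂μ = 1)
  (hp : p ∈ Set.Ioo (0 : ℝ) 1) (hπ : π ∈ Set.Ioo (0 : ℝ) 1) (hmln : m + l + 1 = n)

include hf0 hf1 hi0 hi1 hp hπ hmln in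
lemma condexp_char_m (hmn : m ≤ n) :
    (fun ω : ℕ × (Fin n → E) => (hatM f0 f1 p π x n m ω.2).toReal)
      =ᵐ[nuMeasure μ f0 f1 p π x n]
    (nuMeasure μ f0 f1 p π x n)[Set.indicator {ω' : ℕ × (Fin n → E) | ω'.1 ≤ m}
      (fun _ => (1 : ℝ)) | Ffil n m hmn] := by
  haveI := nu_prob μ f0 f1 p π x n hf0 hf1 hi0 hi1 hp hπ
  have hint : Integrable (fun ω : ℕ × (Fin n → E) => (hatM f0 f1 p π x n m ω.2).toReal)
      (nuMeasure μ f0 f1 p π x n) := by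
    refine Integrable.mono' (integrable_const (1 : ℝ))
      ((Measurable.ennreal_toReal (show Measurable fun ω : ℕ × (Fin n → E) =>
          hatM f0 f1 p π x n m ω.2 from
        (measurable_hatM f0 f1 p π x n m hf0 hf1).comp
          measurable_snd)).aestronglyMeasurable)
      (ae_of_all _ fun ω => ?_)
    rw [Real.norm_eq_abs, abs_of_nonneg ENNReal.toReal_nonneg]
    calc (hatM f0 f1 p π x n m ω.2).toReal
        ≤ (1 : ℝ≥0∞).toReal :=
          ENNReal.toReal_mono ENNReal.one_ne_top (hatM_le_one f0 f1 p π x n m ω.2)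
      _ = 1 := ENNReal.toReal_one
  refine ae_eq_condExp_of_forall_setIntegral_eq (Ffil_le n m hmn)
    ((integrable_const (1 : ℝ)).indicator (mset_theta n m))
    (fun s _ _ => hint.integrableOn) (fun s hs hνs => ?_) ?_
  · rw [Ffil_eq_comap] at hs
    obtain ⟨t, ht, rfl⟩ := MeasurableSpace.measurableSet_comap.mp hs
    rw [setIntegral_gM μ f0 f1 p π x n m l hf0 hf1 hi0 hi1 hp hπ hmln hmn t ht,
      setIntegral_ind μ f0 f1 p π x n m hf0 hf1 m hmn t ht]
  · refine ⟨(fun v : Fin m → E => (AE f0 f1 p π x n m (extC x n m v) /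
        (AE f0 f1 p π x n m (extC x n m v) + CE f0 f1 p π x n m (extC x n m v))).toReal) ∘
        Proj n m hmn, ?_, ?_⟩
    · have hP : Measurable[Ffil n m hmn] (Proj (E := E) n m hmn) := fun s hs => ⟨s, hs, rfl⟩
      have hφ : Measurable (fun v : Fin m → E => (AE f0 f1 p π x n m (extC x n m v) /
          (AE f0 f1 p π x n m (extC x n m v) + CE f0 f1 p π x n m (extC x n m v))).toReal) :=
        Measurable.ennreal_toReal
          (((measurable_AE f0 f1 p π x n m hf0 hf1).comp (measurable_extC x n m)).div
            (((measurable_AE f0 f1 p π x n m hf0 hf1).comp (measurable_extC x n m)).add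
              ((measurable_CE f0 f1 p π x n m hf0 hf1).comp (measurable_extC x n m))))
      exact (hφ.comp hP).stronglyMeasurable
    · refine Filter.EventuallyEq.of_eq (funext fun ω => ?_)
      have hagree := agree_extC_projX x n m hmn ω.2
      simp only [Function.comp_apply]
      unfold hatM
      have h1 : Proj (E := E) n m hmn ω = projX n m hmn ω.2 := rfl
      rw [h1, AE_congr f0 f1 p π x n m hmn _ _ hagree, CE_congr f0 f1 p π x n m hmn _ _ hagree]

include hf0 hf1 hi0 hi1 hp hπ in
lemma condexp_char_n :
    (fun ω : ℕ × (Fin n → E) => (hatN f0 f1 p π x n m ω.2).toReal)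
      =ᵐ[nuMeasure μ f0 f1 p π x n]
    (nuMeasure μ f0 f1 p π x n)[Set.indicator {ω' : ℕ × (Fin n → E) | ω'.1 ≤ m}
      (fun _ => (1 : ℝ)) | Ffil n n le_rfl] := by
  haveI := nu_prob μ f0 f1 p π x n hf0 hf1 hi0 hi1 hp hπ
  have hProj : ∀ ω : ℕ × (Fin n → E), Proj (E := E) n n le_rfl ω = ω.2 := by
    intro ω
    funext i
    show ω.2 (Fin.castLE le_rfl i) = ω.2 i
    have : Fin.castLE le_rfl i = i := Fin.ext (by simp)
    rw [this]
  have hint : Integrable (fun ω : ℕ × (Fin n → E) => (hatN f0 f1 p π x n m ω.2).toReal)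
      (nuMeasure μ f0 f1 p π x n) := by
    refine Integrable.mono' (integrable_const (1 : ℝ))
      ((Measurable.ennreal_toReal (show Measurable fun ω : ℕ × (Fin n → E) =>
          hatN f0 f1 p π x n m ω.2 from
        (measurable_hatN f0 f1 p π x n m hf0 hf1).comp
          measurable_snd)).aestronglyMeasurable)
      (ae_of_all _ fun ω => ?_)
    rw [Real.norm_eq_abs, abs_of_nonneg ENNReal.toReal_nonneg]
    calc (hatN f0 f1 p π x n m ω.2).toReal
        ≤ (1 : ℝ≥0∞).toReal :=
          ENNReal.toReal_mono ENNReal.one_ne_top (hatN_le_one f0 f1 p π x n m ω.2)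
      _ = 1 := ENNReal.toReal_one
  refine ae_eq_condExp_of_forall_setIntegral_eq (Ffil_le n n le_rfl)
    ((integrable_const (1 : ℝ)).indicator (mset_theta n m))
    (fun s _ _ => hint.integrableOn) (fun s hs hνs => ?_) ?_
  · rw [Ffil_eq_comap] at hs
    obtain ⟨t, ht, rfl⟩ := MeasurableSpace.measurableSet_comap.mp hs
    rw [setIntegral_gN μ f0 f1 p π x n m hf0 hf1 hi0 hi1 hp hπ t ht,
      setIntegral_ind μ f0 f1 p π x n m hf0 hf1 n le_rfl t ht]
  · refine ⟨(fun v : Fin n → E => (hatN f0 f1 p π x n m v).toReal) ∘ Proj n n le_rfl, ?_, ?_⟩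
    · have hP : Measurable[Ffil n n le_rfl] (Proj (E := E) n n le_rfl) :=
        fun s hs => ⟨s, hs, rfl⟩
      have hφ : Measurable (fun v : Fin n → E => (hatN f0 f1 p π x n m v).toReal) :=
        Measurable.ennreal_toReal (measurable_hatN f0 f1 p π x n m hf0 hf1)
      exact (hφ.comp hP).stronglyMeasurable
    · refine Filter.EventuallyEq.of_eq (funext fun ω => ?_)
      simp only [Function.comp_apply, hProj ω]

end CondExp
end Stmt8Aux
namespace Stmt8Aux

open MeasureTheory Finset
open scoped NNReal ENNReal

section Final

variable {E : Type*} [MeasurableSpace E]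
  (f0 f1 : E → E → ℝ≥0) (p π : ℝ) (x : E) (n m l : ℕ)

lemma prior_ne_top (j : ℕ) : prior p π j ≠ ∞ := by
  unfold prior
  split_ifs <;> exact ENNReal.ofReal_ne_top

lemma AE_ne_top (xs : Fin n → E) : AE f0 f1 p π x n m xs ≠ ∞ := by
  unfold AE headE
  refine (ENNReal.sum_lt_top.mpr fun j _ => ?_).ne
  exact ENNReal.mul_lt_top (prior_ne_top p π j).lt_top ENNReal.coe_lt_top

lemma CE_ne_top (xs : Fin n → E) : CE f0 f1 p π x n m xs ≠ ∞ := by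
  unfold CE H0E
  exact (ENNReal.mul_lt_top ENNReal.ofReal_lt_top ENNReal.coe_lt_top).ne

lemma RE_ne_top (xs : Fin n → E) : RE f0 f1 p x n m l xs ≠ ∞ := by
  unfold RE TE
  refine (ENNReal.add_lt_top.mpr ⟨ENNReal.sum_lt_top.mpr fun i _ => ?_, ?_⟩).ne
  · exact ENNReal.mul_lt_top ENNReal.ofReal_lt_top ENNReal.coe_lt_top
  · exact ENNReal.mul_lt_top ENNReal.ofReal_lt_top ENNReal.coe_lt_top

variable (hp : p ∈ Set.Ioo (0 : ℝ) 1) (hπ : π ∈ Set.Ioo (0 : ℝ) 1) (hmln : m + l + 1 = n)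

lemma real_ratio (a c tl rr : ℝ) (ha0 : 0 ≤ a) (hc0 : 0 ≤ c) (htl0 : 0 ≤ tl)
    (hrr0 : 0 ≤ rr) :
    a * tl / (a * tl + c * rr) =
      a / (a + c) * tl / (a / (a + c) * tl + (1 - a / (a + c)) * rr) := by
  rcases eq_or_lt_of_le (by positivity : (0 : ℝ) ≤ a + c) with hac | hac
  · have ha : a = 0 := by linarith
    have hc : c = 0 := by linarith
    simp [ha, hc]
  · have hac' : a + c ≠ 0 := hac.ne'
    have h1 : 1 - a / (a + c) = c / (a + c) := by
      rw [eq_div_iff hac', sub_mul, div_mul_cancel₀ _ hac']; ring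
    rw [h1]
    rcases eq_or_lt_of_le (by positivity : (0 : ℝ) ≤ a * tl + c * rr) with hd | hd
    · have h2 : a * tl = 0 := by nlinarith [mul_nonneg ha0 htl0, mul_nonneg hc0 hrr0]
      have hnum : a / (a + c) * tl = 0 := by
        rw [div_mul_eq_mul_div, h2, zero_div]
      rw [h2, hnum]
      simp
    · have hd' : a * tl + c * rr ≠ 0 := hd.ne'
      have hden : a / (a + c) * tl + c / (a + c) * rr = (a * tl + c * rr) / (a + c) := by
        field_simp
      rw [hden, div_div_eq_mul_div]
      rw [mul_right_comm, div_mul_cancel₀ _ hac']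

include hp hπ hmln in
lemma final_algebra (xs : Fin n → E) :
    (hatN f0 f1 p π x n m xs).toReal =
      (hatM f0 f1 p π x n m xs).toReal * (Lfn f0 f1 m n (l + 1) (extvec n x xs) : ℝ) /
        Gfn f0 f1 p m l (extvec n x xs) ((hatM f0 f1 p π x n m xs).toReal) := by
  have hA := AE_ne_top f0 f1 p π x n m xs
  have hC := CE_ne_top f0 f1 p π x n m xs
  have hR := RE_ne_top f0 f1 p x n m l xs
  set a := (AE f0 f1 p π x n m xs).toReal with ha_def
  set c := (CE f0 f1 p π x n m xs).toReal with hc_def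
  set tl := (TE f0 f1 x n m (l + 1) xs).toReal with htl_def
  set rr := (RE f0 f1 p x n m l xs).toReal with hrr_def
  have ha0 : 0 ≤ a := ENNReal.toReal_nonneg
  have hc0 : 0 ≤ c := ENNReal.toReal_nonneg
  have htl0 : 0 ≤ tl := ENNReal.toReal_nonneg
  have hrr0 : 0 ≤ rr := ENNReal.toReal_nonneg
  have hM : (hatM f0 f1 p π x n m xs).toReal = a / (a + c) := by
    unfold hatM
    rw [ENNReal.toReal_div, ENNReal.toReal_add hA hC]
  have hN : (hatN f0 f1 p π x n m xs).toReal = a * tl / (a * tl + c * rr) := by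
    unfold hatN
    have hT1 : AE f0 f1 p π x n m xs * TE f0 f1 x n m (l + 1) xs ≠ ∞ :=
      ENNReal.mul_ne_top hA (by unfold TE; exact ENNReal.coe_ne_top)
    have hT2 : CE f0 f1 p π x n m xs * RE f0 f1 p x n m l xs ≠ ∞ :=
      ENNReal.mul_ne_top hC hR
    rw [NE_eq f0 f1 p π x n m l hmln xs, DE_eq f0 f1 p π x n m l hmln hp hπ xs,
      ENNReal.toReal_div, ENNReal.toReal_add hT1 hT2,
      ENNReal.toReal_mul, ENNReal.toReal_mul]
  have htl : tl = (Lfn f0 f1 m n (l + 1) (extvec n x xs) : ℝ) := by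
    rw [htl_def]
    unfold TE
    rw [ENNReal.coe_toReal]
  have hrr : rr = (∑ i ∈ Finset.range (l + 1),
      p ^ (l - i) * (1 - p) * (Lfn f0 f1 m n (i + 1) (extvec n x xs) : ℝ)) +
      p ^ (l + 1) * (Lfn f0 f1 m n 0 (extvec n x xs) : ℝ) := by
    rw [hrr_def]
    unfold RE TE
    rw [ENNReal.toReal_add (ENNReal.sum_lt_top.mpr fun i _ =>
        ENNReal.mul_lt_top ENNReal.ofReal_lt_top ENNReal.coe_lt_top).ne
      (ENNReal.mul_lt_top ENNReal.ofReal_lt_top ENNReal.coe_lt_top).ne,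
      ENNReal.toReal_sum (fun i _ =>
        (ENNReal.mul_lt_top ENNReal.ofReal_lt_top ENNReal.coe_lt_top).ne)]
    congr 1
    · refine Finset.sum_congr rfl fun i _ => ?_
      rw [ENNReal.toReal_mul, ENNReal.toReal_ofReal
        (mul_nonneg (pow_nonneg hp.1.le _) (by linarith [hp.2])), ENNReal.coe_toReal]
    · rw [ENNReal.toReal_mul, ENNReal.toReal_ofReal (pow_nonneg hp.1.le _),
        ENNReal.coe_toReal]
  have hG : Gfn f0 f1 p m l (extvec n x xs) (a / (a + c)) =
      (a / (a + c)) * tl + (1 - a / (a + c)) * rr := by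
    unfold Gfn
    rw [hmln, htl, hrr]
  rw [hN, hM, hG, ← htl]
  exact real_ratio a c tl rr ha0 hc0 htl0 hrr0

end Final
end Stmt8Aux

/-- For `0 ≤ l < n`, `ν`-a.e.
`ν(θ ≤ n-l-1 | 𝓕_n) = Π_{n-l-1} · L_{l+1}(X_{n-l-1},…,X_n) / G_{l+1}(X_{n-l-1},…,X_n, Π_{n-l-1})`,
where `Π_m = ν(θ ≤ m | 𝓕_m)`. -/
theorem stmt8 {E : Type*} [MeasurableSpace E] (μ : Measure E) [SigmaFinite μ]
    (f0 f1 : E → E → ℝ≥0) (hf0 : Measurable (Function.uncurry f0))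
    (hf1 : Measurable (Function.uncurry f1))
    (hi0 : ∀ z, ∫⁻ y, (f0 z y : ℝ≥0∞) ∂μ = 1) (hi1 : ∀ z, ∫⁻ y, (f1 z y : ℝ≥0∞) ∂μ = 1)
    (p π : ℝ) (hp : p ∈ Set.Ioo (0 : ℝ) 1) (hπ : π ∈ Set.Ioo (0 : ℝ) 1)
    (x : E) (n l : ℕ) (hn : 1 ≤ n) (hl : l < n) :
    ∀ᵐ ω ∂(nuMeasure μ f0 f1 p π x n),
      ((nuMeasure μ f0 f1 p π x n)[Set.indicator {ω' : ℕ × (Fin n → E) | ω'.1 ≤ n - l - 1}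
          (fun _ => (1 : ℝ)) | Ffil n n le_rfl]) ω =
        ((nuMeasure μ f0 f1 p π x n)[Set.indicator {ω' : ℕ × (Fin n → E) | ω'.1 ≤ n - l - 1}
            (fun _ => (1 : ℝ)) | Ffil n (n - l - 1) (by omega)]) ω *
          (Lfn f0 f1 (n - l - 1) n (l + 1) (extvec n x ω.2) : ℝ) /
          Gfn f0 f1 p (n - l - 1) l (extvec n x ω.2)
            (((nuMeasure μ f0 f1 p π x n)[Set.indicator {ω' : ℕ × (Fin n → E) | ω'.1 ≤ n - l - 1}
              (fun _ => (1 : ℝ)) | Ffil n (n - l - 1) (by omega)]) ω) := by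
  have hmln : (n - l - 1) + l + 1 = n := by omega
  have hmn : n - l - 1 ≤ n := by omega
  have hN := Stmt8Aux.condexp_char_n μ f0 f1 p π x n (n - l - 1) hf0 hf1 hi0 hi1 hp hπ
  have hM := Stmt8Aux.condexp_char_m μ f0 f1 p π x n (n - l - 1) l hf0 hf1 hi0 hi1 hp hπ
    hmln hmn
  filter_upwards [hN, hM] with ω h1 h2
  rw [← h1, ← h2]
  exact Stmt8Aux.final_algebra f0 f1 p π x n (n - l - 1) l hp hπ hmln ω.2
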